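/- Let n > 1 and G = (Z_{2^n} × Z_{2^n}) ⋊ ⟨x⟩ with x of order 2^{n-1} acting on A by c ↦ c³. Then there exists an automorphism φ of G such that [G,φ] = {g⁻¹ φ(g) | g ∈ G} is not a subgroup of G. -/

import Mathlib

private def eAux : ℕ → ℕ
  | 0 => 0
  | k+1 => 3 * eAux k + 1

private lemma eAux_spec (k : ℕ) : 2 * eAux k + 1 = 3 ^ k := by
  induction k with
  | zero => rfl
  | succ k ih => simp only [eAux, pow_succ]; omega

private lemma three_pow_pow (m : ℕ) : ∃ t, 3 ^ 2 ^ (m+1) = 2 ^ (m+3) * t + 1 := by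
  induction m with
  | zero => exact ⟨1, rfl⟩
  | succ m ih =>
    obtain ⟨t, ht⟩ := ih
    refine ⟨2^(m+2)*t^2 + t, ?_⟩
    have h : (3:ℕ) ^ 2 ^ (m+2) = (3 ^ 2 ^ (m+1))^2 := by
      rw [← pow_mul, ← pow_succ]
    rw [h, ht]; ring

private lemma eAux_div (n : ℕ) (hn : 1 < n) : ∃ t, eAux (2^(n-1)) = 2^n * t := by
  obtain ⟨t, ht⟩ := three_pow_pow (n-2)
  have h1 : n - 2 + 1 = n - 1 := by omega
  have h2 : n - 2 + 3 = n + 1 := by omega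
  rw [h1, h2] at ht
  have h3 := eAux_spec (2^(n-1))
  rw [ht] at h3
  have h4 : (2:ℕ)^(n+1) = 2 * 2^n := by ring
  refine ⟨t, ?_⟩
  rw [h4, mul_assoc] at h3
  omega

/-- Let `n > 1` and `G = A ⋊ ⟨x⟩` where `A ≅ Z_{2^n} × Z_{2^n}`, `x` has order `2^{n-1}`
and acts on `A` by `c ↦ c³`.  Then there exists an automorphism `φ` of `G` such that
`[G,φ] = {g⁻¹ φ(g) | g ∈ G}` is not a subgroup of `G`. -/
theorem two_group_has_bad_automorphism (n : ℕ) (hn : 1 < n) (G : Type*) [Group G] [Finite G]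
    (A : Subgroup G) (x : G)
    (hAnorm : A.Normal)
    (hcompl : Subgroup.IsComplement' A (Subgroup.zpowers x))
    (hAiso : Nonempty (A ≃* Multiplicative (ZMod (2 ^ n) × ZMod (2 ^ n))))
    (hx : orderOf x = 2 ^ (n - 1))
    (hact : ∀ c ∈ A, x⁻¹ * c * x = c ^ 3) :
    ∃ φ : G ≃* G, ¬ ∃ H : Subgroup G, (H : Set G) = {g : G | ∃ a : G, g = a⁻¹ * φ a} := by
  classical
  obtain ⟨f⟩ := hAiso
  -- commutativity of A
  have hAcomm : ∀ a ∈ A, ∀ b ∈ A, a * b = b * a := by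
    intro a ha b hb
    have h1 : f (⟨a, ha⟩ * ⟨b, hb⟩) = f (⟨b, hb⟩ * ⟨a, ha⟩) := by
      rw [map_mul, map_mul, mul_comm]
    have h2 := f.injective h1
    exact congrArg Subtype.val h2
  -- the element c of order 2^n
  set c0 : A := f.symm (Multiplicative.ofAdd ((1 : ZMod (2^n)), (0 : ZMod (2^n)))) with hc0
  set c : G := (c0 : G) with hcdef
  have hcA : c ∈ A := c0.2
  have hordc : orderOf c = 2 ^ n := by
    have h1 : orderOf c = orderOf c0 := orderOf_submonoid c0
    have h2 : orderOf c0 = orderOf (Multiplicative.ofAdd ((1 : ZMod (2^n)), (0 : ZMod (2^n)))) := by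
      rw [hc0]; exact f.symm.orderOf_eq _
    have h3 : orderOf (Multiplicative.ofAdd ((1 : ZMod (2^n)), (0 : ZMod (2^n))))
        = addOrderOf ((1 : ZMod (2^n)), (0 : ZMod (2^n))) :=
      orderOf_ofAdd_eq_addOrderOf _
    have h4 : addOrderOf ((1 : ZMod (2^n)), (0 : ZMod (2^n)))
        = Nat.lcm (addOrderOf (1 : ZMod (2^n))) (addOrderOf (0 : ZMod (2^n))) :=
      Prod.addOrderOf _
    rw [h1, h2, h3, h4, ZMod.addOrderOf_one, addOrderOf_zero, Nat.lcm_one_right]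
  set M : ℕ := 2 ^ (n - 1) with hM
  have hMpos : 0 < M := Nat.pow_pos (by norm_num)
  -- conjugation formulas
  have hconjc : ∀ m : ℕ, x⁻¹ * c ^ m * x = c ^ (3 * m) := by
    intro m
    induction m with
    | zero => simp
    | succ m ih =>
      have : x⁻¹ * c ^ (m+1) * x = (x⁻¹ * c ^ m * x) * (x⁻¹ * c * x) := by group
      rw [this, ih, hact c hcA, ← pow_add]
      ring_nf
  set y : G := x * c with hy
  have hyk : ∀ k : ℕ, y ^ k = x ^ k * c ^ (eAux k) := by
    intro k
    induction k with
    | zero => simp [eAux]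
    | succ k ih =>
      have h1 : y ^ (k+1) = y ^ k * (x * c) := by rw [pow_succ, hy]
      rw [h1, ih]
      have h2 : x ^ k * c ^ eAux k * (x * c) = x ^ (k+1) * ((x⁻¹ * c ^ eAux k * x) * c) := by
        rw [pow_succ]; group
      rw [h2, hconjc, eAux, ← pow_succ]
  have hxM1 : x ^ M = 1 := by rw [← hx]; exact pow_orderOf_eq_one x
  have hyM : y ^ M = 1 := by
    obtain ⟨t, ht⟩ := eAux_div n hn
    have hceM : c ^ eAux M = 1 := by
      rw [hM, ht, pow_mul, ← hordc, pow_orderOf_eq_one, one_pow]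
    rw [hyk M, hxM1, hceM, one_mul]
  have hordy : orderOf y ∣ orderOf x := by
    rw [hx]; exact orderOf_dvd_of_pow_eq_one hyM
  -- decomposition
  have hdec : ∀ g : G, ∃ p : G × ℕ, p.1 ∈ A ∧ g = p.1 * x ^ p.2 := by
    intro g
    obtain ⟨⟨⟨a, ha⟩, ⟨t, htmem⟩⟩, hprod, -⟩ := hcompl.existsUnique g
    obtain ⟨m, hm⟩ := Subgroup.mem_zpowers_iff.mp htmem
    have hxM : x ^ ((M : ℕ) : ℤ) = 1 := by
      rw [zpow_natCast]; exact hxM1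
    have hmod : x ^ m = x ^ (m % (M : ℤ)) := by
      conv_lhs => rw [← Int.emod_add_mul_ediv m (M : ℤ)]
      rw [zpow_add, zpow_mul, hxM, one_zpow, mul_one]
    have hnonneg : 0 ≤ m % (M : ℤ) := Int.emod_nonneg m (by exact_mod_cast hMpos.ne')
    refine ⟨(a, (m % (M : ℤ)).toNat), ha, ?_⟩
    have : x ^ (m % (M : ℤ)).toNat = x ^ m := by
      rw [← zpow_natCast, Int.toNat_of_nonneg hnonneg, ← hmod]
    simp only [this, hm]
    exact hprod.symm
  -- uniqueness of decomposition
  have huniq : ∀ a ∈ A, ∀ b ∈ A, ∀ j k : ℕ, a * x ^ j = b * x ^ k → a = b ∧ x ^ j = x ^ k := by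
    intro a ha b hb j k heq
    have h1 : b⁻¹ * a = x ^ k * (x ^ j)⁻¹ := by
      have : b⁻¹ * (a * x ^ j) * (x ^ j)⁻¹ = b⁻¹ * (b * x ^ k) * (x ^ j)⁻¹ := by rw [heq]
      calc b⁻¹ * a = b⁻¹ * (a * x ^ j) * (x ^ j)⁻¹ := by group
        _ = b⁻¹ * (b * x ^ k) * (x ^ j)⁻¹ := this
        _ = x ^ k * (x ^ j)⁻¹ := by group
    have hmem1 : b⁻¹ * a ∈ A := A.mul_mem (A.inv_mem hb) ha
    have hmem2 : b⁻¹ * a ∈ Subgroup.zpowers x := by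
      rw [h1]
      exact Subgroup.mul_mem _ (Subgroup.pow_mem _ (Subgroup.mem_zpowers x) k)
        (Subgroup.inv_mem _ (Subgroup.pow_mem _ (Subgroup.mem_zpowers x) j))
    have hone : b⁻¹ * a = 1 :=
      Subgroup.disjoint_def.mp hcompl.disjoint hmem1 hmem2
    have hab : a = b := by
      have := inv_mul_eq_one.mp hone; exact this.symm
    refine ⟨hab, ?_⟩
    rw [hab] at heq
    exact mul_left_cancel heq
  -- x^j = x^k implies y^j = y^k
  have hxy : ∀ j k : ℕ, x ^ j = x ^ k → y ^ j = y ^ k := by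
    intro j k h
    have h1 : j ≡ k [MOD orderOf x] := pow_eq_pow_iff_modEq.mp h
    exact pow_eq_pow_iff_modEq.mpr (h1.of_dvd hordy)
  -- the function
  set f0 : G → G := fun g => (hdec g).choose.1 * y ^ (hdec g).choose.2 with hf0def
  have hf0 : ∀ a, a ∈ A → ∀ k : ℕ, f0 (a * x ^ k) = a * y ^ k := by
    intro a ha k
    obtain ⟨hpA, hpe⟩ := (hdec (a * x ^ k)).choose_spec
    obtain ⟨hab, hjk⟩ := huniq a ha _ hpA k _ hpe
    rw [hf0def]
    simp only []
    rw [← hab, ← hxy _ _ hjk.symm]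
  -- multiplicativity
  have hmul : ∀ g₁ g₂ : G, f0 (g₁ * g₂) = f0 g₁ * f0 g₂ := by
    intro g₁ g₂
    obtain ⟨⟨a, j⟩, ha, hg₁⟩ := hdec g₁
    obtain ⟨⟨b, k⟩, hb, hg₂⟩ := hdec g₂
    simp only [] at ha hg₁ hb hg₂
    set b' : G := x ^ j * b * (x ^ j)⁻¹ with hb'def
    have hb' : b' ∈ A := hAnorm.conj_mem b hb (x ^ j)
    have h1 : g₁ * g₂ = (a * b') * x ^ (j + k) := by
      rw [hg₁, hg₂, hb'def, pow_add]; group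
    have key : b' * (x ^ j * c ^ eAux j) = (x ^ j * c ^ eAux j) * b := by
      have hcom := hAcomm b hb (c ^ eAux j) (A.pow_mem hcA _)
      calc b' * (x ^ j * c ^ eAux j) = x ^ j * (b * c ^ eAux j) := by rw [hb'def]; group
        _ = x ^ j * (c ^ eAux j * b) := by rw [hcom]
        _ = (x ^ j * c ^ eAux j) * b := by group
    rw [h1, hg₁, hg₂, hf0 _ (A.mul_mem ha hb') _, hf0 _ ha _, hf0 _ hb _, pow_add, hyk j]
    calc a * b' * (x ^ j * c ^ eAux j * y ^ k)
        = a * (b' * (x ^ j * c ^ eAux j)) * y ^ k := by group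
      _ = a * ((x ^ j * c ^ eAux j) * b) * y ^ k := by rw [key]
      _ = a * (x ^ j * c ^ eAux j) * (b * y ^ k) := by group
  -- surjectivity
  have hsurj : Function.Surjective f0 := by
    intro h
    obtain ⟨⟨a, k⟩, ha, hh⟩ := hdec h
    simp only [] at ha hh
    set d : G := x ^ k * c ^ eAux k * (x ^ k)⁻¹ with hddef
    have hd : d ∈ A := hAnorm.conj_mem _ (A.pow_mem hcA _) (x ^ k)
    refine ⟨(a * d⁻¹) * x ^ k, ?_⟩
    rw [hf0 _ (A.mul_mem ha (A.inv_mem hd)) k, hyk k, hh, hddef]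
    group
  let fhom : G →* G :=
    { toFun := f0
      map_one' := by
        have := hf0 1 (one_mem A) 0
        simpa using this
      map_mul' := hmul }
  have hbij : Function.Bijective fhom :=
    ⟨Finite.injective_iff_surjective.mpr hsurj, hsurj⟩
  refine ⟨MulEquiv.ofBijective fhom hbij, ?_⟩
  rintro ⟨H, hH⟩
  have hφ : ∀ g : G, (MulEquiv.ofBijective fhom hbij) g = f0 g := fun g => rfl
  -- c ∈ H
  have hcH : c ∈ H := by
    rw [← SetLike.mem_coe, hH]
    refine ⟨x, ?_⟩
    have h1 : f0 x = x * c := by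
      have := hf0 1 (one_mem A) 1
      simpa [hy] using this
    rw [hφ, h1]
    group
  -- every element of H is c ^ eAux r with r < M
  have hsub : ∀ g ∈ H, ∃ r, r < M ∧ g = c ^ eAux r := by
    intro g hg
    rw [← SetLike.mem_coe, hH] at hg
    obtain ⟨a, hga⟩ := hg
    obtain ⟨⟨b, j⟩, hb, hab⟩ := hdec a
    simp only [] at hb hab
    have h1 : g = c ^ eAux j := by
      rw [hga, hφ, hab, hf0 _ hb _, hyk j]
      group
    refine ⟨j % M, Nat.mod_lt _ hMpos, ?_⟩
    have hxj : x ^ j = x ^ (j % M) := by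
      refine pow_eq_pow_iff_modEq.mpr ?_
      rw [hx]
      exact (Nat.mod_modEq j M).symm
    have hyj : y ^ j = y ^ (j % M) := hxy _ _ hxj
    have h2 : c ^ eAux j = c ^ eAux (j % M) := by
      have e1 : (x ^ j)⁻¹ * y ^ j = c ^ eAux j := by rw [hyk]; group
      have e2 : (x ^ (j % M))⁻¹ * y ^ (j % M) = c ^ eAux (j % M) := by rw [hyk]; group
      rw [← e1, ← e2, hxj, hyj]
    rw [h1, h2]
  -- cardinality bound
  set F : Finset G := (Finset.range M).image (fun r => c ^ eAux r) with hF
  have hHF : (H : Set G) ⊆ ↑F := by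
    intro g hg
    obtain ⟨r, hr, rfl⟩ := hsub g hg
    exact Finset.mem_coe.mpr (Finset.mem_image.mpr ⟨r, Finset.mem_range.mpr hr, rfl⟩)
  have hcard1 : Nat.card H ≤ M := by
    have h1 : (H : Set G).ncard ≤ (F : Set G).ncard :=
      Set.ncard_le_ncard hHF F.finite_toSet
    rw [Set.ncard_coe_finset] at h1
    have h2 : Nat.card H = (H : Set G).ncard := by
      rw [← Nat.card_coe_set_eq]
      rfl
    have h3 : F.card ≤ M := le_trans Finset.card_image_le (le_of_eq (Finset.card_range M))
    omega
  have hdvd : 2 ^ n ∣ Nat.card H := by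
    rw [← hordc]
    exact Subgroup.orderOf_dvd_natCard H hcH
  have hle : 2 ^ n ≤ Nat.card H := Nat.le_of_dvd Nat.card_pos hdvd
  have hlt : M < 2 ^ n := by
    rw [hM]
    exact Nat.pow_lt_pow_right (by norm_num) (by omega)
  omega
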